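/- Let K be a field and C ∈ Mat_n(K) a Cauchy matrix with data (x_i; x̃_i). Let V be an n-dimensional K-vector space with bases {v_i} and {w_i} such that C is the transition matrix from {v_i} to {w_i}. Let X be the endomorphism with Xv_i = x_i v_i and X̃ the endomorphism with X̃w_i = x̃_i w_i. Then (X, X̃) is a Cauchy pair on V, i.e. X and X̃ are diagonalizable, X - X̃ has rank 1, and no proper nonzero subspace of V is invariant under both X and X̃. -/

import Mathlib

def IsCauchyPair (K V : Type*) [Field K] [AddCommGroup V] [Module K V]
    (X Xt : Module.End K V) : Prop :=
  (⨆ μ : K, X.eigenspace μ) = ⊤ ∧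
  (⨆ μ : K, Xt.eigenspace μ) = ⊤ ∧
  Module.rank K (LinearMap.range (X - Xt)) = 1 ∧
  ∀ W : Submodule K V, W.map (X : V →ₗ[K] V) ≤ W → W.map (Xt : V →ₗ[K] V) ≤ W →
    W = ⊥ ∨ W = ⊤

section Aux

variable {K V : Type*} [Field K] [AddCommGroup V] [Module K V]

lemma aux_pow_eigen (X : Module.End K V) (μ : K) (u : V) (h : X u = μ • u) :
    ∀ k : ℕ, (X ^ k) u = μ ^ k • u := by
  intro k
  induction k with
  | zero => simp
  | succ k ih =>
      rw [pow_succ', Module.End.mul_apply, ih, map_smul, h, smul_smul, pow_succ', mul_comm]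

lemma aux_aeval_eigen (X : Module.End K V) (μ : K) (u : V) (h : X u = μ • u)
    (p : Polynomial K) : (Polynomial.aeval X p) u = p.eval μ • u := by
  induction p using Polynomial.induction_on' with
  | add p q hp hq =>
      simp [map_add, LinearMap.add_apply, hp, hq, add_smul]
  | monomial k a =>
      simp [Polynomial.aeval_monomial, Module.End.mul_apply,
        Module.algebraMap_end_apply, aux_pow_eigen X μ u h k, smul_smul, mul_comm]

lemma aux_poly_invariant (X : Module.End K V) (W : Submodule K V)
    (hW : ∀ u ∈ W, X u ∈ W) (p : Polynomial K) (u : V) (hu : u ∈ W) :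
    (Polynomial.aeval X p) u ∈ W := by
  induction p using Polynomial.induction_on' with
  | add p q hp hq => simpa [map_add] using W.add_mem hp hq
  | monomial k a =>
      have hpow : ∀ k : ℕ, (X ^ k) u ∈ W := by
        intro k
        induction k with
        | zero => simpa
        | succ k ih => rw [pow_succ', Module.End.mul_apply]; exact hW _ ih
      simpa [Polynomial.aeval_monomial, Module.End.mul_apply,
        Module.algebraMap_end_apply] using W.smul_mem a (hpow k)

lemma aux_eigvec_mem {n : ℕ} (X : Module.End K V) (v : Module.Basis (Fin n) K V)
    (x : Fin n → K) (hx : Function.Injective x)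
    (hXv : ∀ i, X (v i) = x i • v i)
    (W : Submodule K V) (hW : ∀ u ∈ W, X u ∈ W)
    (u : V) (hu : u ∈ W) (i : Fin n) (hi : v.repr u i ≠ 0) : v i ∈ W := by
  set p := Lagrange.basis Finset.univ x i with hp
  have heval : ∀ j, p.eval (x j) = if j = i then 1 else 0 := by
    intro j
    by_cases h : j = i
    · subst h
      simp [hp, Lagrange.eval_basis_self hx.injOn (Finset.mem_univ j)]
    · rw [if_neg h, hp]
      exact Lagrange.eval_basis_of_ne (Ne.symm h) (Finset.mem_univ j)
  have hmem : (Polynomial.aeval X p) u ∈ W := aux_poly_invariant X W hW p u hu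
  have hcalc : (Polynomial.aeval X p) u = v.repr u i • v i := by
    conv_lhs => rw [← v.sum_repr u]
    rw [map_sum]
    have haev : ∀ j, (Polynomial.aeval X p) (v j) = p.eval (x j) • v j :=
      fun j => aux_aeval_eigen X (x j) (v j) (hXv j) p
    rw [Finset.sum_eq_single i]
    · simp [haev, heval]
    · intro j _ hj
      simp [haev, heval, hj]
    · simp
  rw [hcalc] at hmem
  have := W.smul_mem (v.repr u i)⁻¹ hmem
  rwa [smul_smul, inv_mul_cancel₀ hi, one_smul] at this

end Aux

theorem stmt9 {K V : Type*} [Field K] [AddCommGroup V] [Module K V] [FiniteDimensional K V]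
    {n : ℕ} (hn : 0 < n)
    (x xt : Fin n → K)
    (hx : Function.Injective x) (hxt : Function.Injective xt) (hxxt : ∀ i j, x i ≠ xt j)
    (C : Matrix (Fin n) (Fin n) K) (hC : ∀ i j, C i j = (x i - xt j)⁻¹)
    (v w : Module.Basis (Fin n) K V)
    (htrans : ∀ j, w j = ∑ i, C i j • v i)
    (X Xt : Module.End K V)
    (hX : ∀ i, X (v i) = x i • v i) (hXt : ∀ i, Xt (w i) = xt i • w i) :
    IsCauchyPair K V X Xt := by
  set s : V := ∑ i, v i with hs
  have hdiff : ∀ j, (X - Xt) (w j) = s := by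
    intro j
    have hXw : X (w j) = ∑ i, (C i j * x i) • v i := by
      rw [htrans j, map_sum]
      refine Finset.sum_congr rfl fun i _ => ?_
      rw [map_smul, hX i, smul_smul]
    have hXtw : Xt (w j) = ∑ i, (xt j * C i j) • v i := by
      rw [hXt j, htrans j, Finset.smul_sum]
      refine Finset.sum_congr rfl fun i _ => ?_
      rw [smul_smul]
    rw [LinearMap.sub_apply, hXw, hXtw, ← Finset.sum_sub_distrib, hs]
    refine Finset.sum_congr rfl fun i _ => ?_
    rw [← sub_smul]
    have hne : x i - xt j ≠ 0 := sub_ne_zero.mpr (hxxt i j)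
    have : C i j * x i - xt j * C i j = 1 := by
      rw [hC]; field_simp
    rw [this, one_smul]
  have hreprs : ∀ i, v.repr s i = 1 := by
    intro i
    simp [hs, map_sum, Module.Basis.repr_self, Finsupp.single_apply]
  have hs0 : s ≠ 0 := by
    intro h
    have := hreprs ⟨0, hn⟩
    rw [h] at this
    simp at this
  refine ⟨?_, ?_, ?_, ?_⟩
  · rw [eq_top_iff, ← v.span_eq, Submodule.span_le]
    rintro _ ⟨i, rfl⟩
    exact le_iSup (fun μ => X.eigenspace μ) (x i)
      (by rw [Module.End.mem_eigenspace_iff]; exact hX i)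
  · rw [eq_top_iff, ← w.span_eq, Submodule.span_le]
    rintro _ ⟨i, rfl⟩
    exact le_iSup (fun μ => Xt.eigenspace μ) (xt i)
      (by rw [Module.End.mem_eigenspace_iff]; exact hXt i)
  · have hrange : LinearMap.range ((X - Xt : Module.End K V) : V →ₗ[K] V)
        = Submodule.span K {s} := by
      apply le_antisymm
      · rintro _ ⟨u, rfl⟩
        rw [show u = ∑ j, w.repr u j • w j from (w.sum_repr u).symm, map_sum]
        have : ∀ j ∈ Finset.univ, (X - Xt) (w.repr u j • w j) = w.repr u j • s := by
          intro j _
          rw [map_smul, hdiff j]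
        rw [Finset.sum_congr rfl this, ← Finset.sum_smul]
        exact Submodule.smul_mem _ _ (Submodule.mem_span_singleton_self s)
      · rw [Submodule.span_le, Set.singleton_subset_iff]
        exact ⟨w ⟨0, hn⟩, hdiff _⟩
    rw [hrange, ← Module.finrank_eq_rank, finrank_span_singleton hs0, Nat.cast_one]
  · intro W hWX hWXt
    by_cases hbot : W = ⊥
    · exact Or.inl hbot
    right
    have hWX' : ∀ u ∈ W, X u ∈ W := fun u hu => hWX ⟨u, hu, rfl⟩
    have hWXt' : ∀ u ∈ W, Xt u ∈ W := fun u hu => hWXt ⟨u, hu, rfl⟩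
    obtain ⟨u, hu, hu0⟩ := Submodule.ne_bot_iff W |>.mp hbot
    obtain ⟨j, hj⟩ : ∃ j, w.repr u j ≠ 0 := by
      by_contra hc
      push_neg at hc
      apply hu0
      have : w.repr u = 0 := Finsupp.ext hc
      simpa using congrArg w.repr.symm this
    have hwj : w j ∈ W := aux_eigvec_mem Xt w xt hxt hXt W hWXt' u hu j hj
    have hsW : s ∈ W := by
      rw [← hdiff j, LinearMap.sub_apply]
      exact W.sub_mem (hWX' _ hwj) (hWXt' _ hwj)
    have hvW : ∀ i, v i ∈ W := by
      intro i
      refine aux_eigvec_mem X v x hx hX W hWX' s hsW i ?_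
      rw [hreprs i]; exact one_ne_zero
    rw [eq_top_iff, ← v.span_eq, Submodule.span_le]
    rintro _ ⟨i, rfl⟩
    exact hvW i
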